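/- Let π be a group, ρ : π → π a group homomorphism, and k ≥ 1 an integer. Define the relation R on Fin k → π by: R x y if and only if there exists g : Fin k → π with y_i = g_i · x_i · (ρ(g_{i+1}))⁻¹ for all i (indices mod k). For y, z ∈ π, the tuples (y, 1, …, 1) and (z, 1, …, 1) are R-related if and only if there exists g ∈ π with z = g · y · (ρ^k(g))⁻¹, where ρ^k denotes the k-th iterate of ρ (i.e. if and only if y and z are ρ^k-twisted conjugate). -/

import Mathlib

/-- The relation `R x y ↔ ∃ g, ∀ i, y_i = g_i · x_i · (ρ(g_{i+1}))⁻¹` (indices mod `k`). -/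
def tupleRel {π : Type*} [Group π] {k : ℕ} [NeZero k] (ρ : π →* π)
    (x y : Fin k → π) : Prop :=
  ∃ g : Fin k → π, ∀ i : Fin k, y i = g i * x i * (ρ (g (i + 1)))⁻¹

lemma exp_aux (k v : ℕ) (h2 : v < k) : (k - (v + 1) % k) % k + 1 = k - v := by
  rcases eq_or_lt_of_le (Nat.succ_le_of_lt h2) with h | h
  · rw [← h]
    simp [Nat.mod_self]
  · rw [Nat.mod_eq_of_lt h, Nat.mod_eq_of_lt (by omega)]
    omega

open Fin.CommRing

/-- `(y,1,…,1)` and `(z,1,…,1)` are related iff `y` and `z` are `ρ^k`-twisted conjugate. -/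
theorem tupleRel_on_normal_forms_iff_twisted_conjugate {π : Type*} [Group π] {k : ℕ}
    [NeZero k] (ρ : π →* π) (y z : π) :
    tupleRel ρ (fun i : Fin k => if i = 0 then y else 1)
        (fun i : Fin k => if i = 0 then z else 1) ↔
      ∃ g : π, z = g * y * ((⇑ρ)^[k] g)⁻¹ := by
  have hk : 0 < k := Nat.pos_of_ne_zero (NeZero.ne k)
  constructor
  · rintro ⟨g, hg⟩
    refine ⟨g 0, ?_⟩
    have key : ∀ n : ℕ, n < k → g (0 - (n : Fin k)) = (⇑ρ)^[n] (g 0) := by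
      intro n hn
      induction n with
      | zero => simp
      | succ m ih =>
        have hm : m < k := Nat.lt_of_succ_lt hn
        have hne : (0 - ((m + 1 : ℕ) : Fin k)) ≠ 0 := by
          intro h
          rw [sub_eq_zero] at h
          have hd : k ∣ m + 1 := Fin.natCast_eq_zero.mp h.symm
          have := Nat.le_of_dvd (by omega) hd
          omega
        have h1 := hg (0 - ((m + 1 : ℕ) : Fin k))
        simp only [if_neg hne, mul_one] at h1
        have hidx : (0 - ((m + 1 : ℕ) : Fin k)) + 1 = 0 - ((m : ℕ) : Fin k) := by
          push_cast
          ring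
        rw [hidx, eq_comm, mul_inv_eq_one] at h1
        rw [h1, ih hm]
        exact (Function.iterate_succ_apply' ρ m (g 0)).symm
    have h1k : ((k - 1 : ℕ) : Fin k) + 1 = 0 := by
      have h' : (((k - 1) + 1 : ℕ) : Fin k) = ((k - 1 : ℕ) : Fin k) + 1 := by
        push_cast; ring
      rw [← h', Nat.sub_add_cancel hk, Fin.natCast_self]
    have hone : (0 - ((k - 1 : ℕ) : Fin k)) = 1 := by
      rw [zero_sub, neg_eq_iff_add_eq_zero]
      exact h1k
    have hk1 := key (k - 1) (by omega)
    rw [hone] at hk1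
    have h0 := hg 0
    simp only [eq_self_iff_true, if_true, zero_add] at h0
    rw [h0, hk1, ← Function.iterate_succ_apply' ρ (k - 1) (g 0), Nat.succ_eq_add_one,
      Nat.sub_add_cancel hk]
  · rintro ⟨g, hgz⟩
    refine ⟨fun i => (⇑ρ)^[(k - i.val) % k] g, ?_⟩
    intro i
    have hval1 : ((1 : Fin k)).val = 1 % k := by
      rcases k with _ | k
      · exact absurd rfl (NeZero.ne 0)
      · exact Fin.val_one' _
    by_cases h : i = 0
    · subst h
      simp only [eq_self_iff_true, if_true, zero_add]
      have hE : ρ ((⇑ρ)^[(k - ((1 : Fin k)).val) % k] g) = (⇑ρ)^[k] g := by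
        rw [(Function.iterate_succ_apply' ρ ((k - ((1 : Fin k)).val) % k) g).symm]
        congr 1
        rw [Nat.succ_eq_add_one, hval1]
        simpa using exp_aux k 0 hk
      rw [show (k - ((0 : Fin k)).val) % k = 0 by simp, Function.iterate_zero_apply, hE, hgz]
    · simp only [if_neg h, mul_one]
      have hiv : 1 ≤ i.val ∧ i.val < k :=
        ⟨Nat.one_le_iff_ne_zero.mpr (fun hh => h (Fin.ext hh)), i.isLt⟩
      have hadd : ((i + 1 : Fin k)).val = (i.val + 1) % k := by simp [Fin.add_def]
      have hE2 : ρ ((⇑ρ)^[(k - ((i + 1 : Fin k)).val) % k] g) = (⇑ρ)^[(k - i.val) % k] g := by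
        rw [(Function.iterate_succ_apply' ρ ((k - ((i + 1 : Fin k)).val) % k) g).symm]
        congr 1
        rw [Nat.succ_eq_add_one, hadd, Nat.mod_eq_of_lt (show k - i.val < k by omega)]
        exact exp_aux k i.val hiv.2
      rw [hE2]
      group
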